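/- arXiv:1507.01095 — 2 statements merged into one kernel-verified Lean document; each statement's English description precedes it below -/
import Mathlib

section
/- Let C be a (k,r,h) local maximally recoverable code with exactly two local groups (so k + h = 2r, r+1 ≤ k < 2r, and n = 2r + 2). Then the generalized Hamming weights of C are d_s = h + 1 + s for 1 ≤ s ≤ r - h, and d_s = h + 2 + s for r - h + 1 ≤ s ≤ 2r - h. -/
open Finset

abbrev LIdx (k h ℓ : ℕ) : Type := Fin (k + h) ⊕ Fin ℓ

def lGroup (k h r ℓ : ℕ) (i : Fin ℓ) : Finset (LIdx k h ℓ) :=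
  insert (Sum.inr i)
    ((Finset.univ.filter fun t : Fin (k + h) =>
      (i : ℕ) * r ≤ (t : ℕ) ∧ (t : ℕ) < ((i : ℕ) + 1) * r).image Sum.inl)

def lCoord (k h r ℓ : ℕ) (hkh : k + h = ℓ * r) (i : Fin ℓ) (j : Fin r) : Fin (k + h) :=
  ⟨(i : ℕ) * r + (j : ℕ), by
    have hi : (i : ℕ) + 1 ≤ ℓ := i.2
    have hj : (j : ℕ) < r := j.2
    have h1 : ((i : ℕ) + 1) * r ≤ ℓ * r := Nat.mul_le_mul_right r hi
    have h2 : ((i : ℕ) + 1) * r = (i : ℕ) * r + r := by ring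
    omega⟩

/-! ### Auxiliary lemmas -/

lemma card_Ico' (n a b : ℕ) (hb : b ≤ n) :
    (Finset.univ.filter fun t : Fin n => a ≤ (t : ℕ) ∧ (t : ℕ) < b).card = b - a := by
  rw [show (Finset.univ.filter fun t : Fin n => a ≤ (t : ℕ) ∧ (t : ℕ) < b)
      = (Finset.Ico a b).attachFin (fun m hm => by rw [Finset.mem_Ico] at hm; omega) from ?_,
    Finset.card_attachFin, Nat.card_Ico]
  ext t
  simp [Finset.mem_attachFin]

lemma mem_lGroup_iff (k h r : ℕ) (i : Fin 2) (x : LIdx k h 2) :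
    x ∈ lGroup k h r 2 i ↔ x = Sum.inr i ∨
      ∃ t : Fin (k + h), x = Sum.inl t ∧ (i : ℕ) * r ≤ (t : ℕ) ∧ (t : ℕ) < ((i : ℕ) + 1) * r := by
  unfold lGroup
  simp only [Finset.mem_insert, Finset.mem_image, Finset.mem_filter, Finset.mem_univ, true_and]
  constructor
  · rintro (rfl | ⟨t, ht, rfl⟩)
    · exact Or.inl rfl
    · exact Or.inr ⟨t, rfl, ht⟩
  · rintro (rfl | ⟨t, rfl, ht⟩)
    · exact Or.inl rfl
    · exact Or.inr ⟨t, ht, rfl⟩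

lemma card_lGroup (k h r : ℕ) (hkh : k + h = 2 * r) (i : Fin 2) :
    (lGroup k h r 2 i).card = r + 1 := by
  unfold lGroup
  rw [Finset.card_insert_of_notMem (by simp),
    Finset.card_image_of_injective _ Sum.inl_injective,
    card_Ico' _ _ _ (by have := i.2; nlinarith [i.2])]
  have := i.2
  have : ((i : ℕ) + 1) * r = (i : ℕ) * r + r := by ring
  omega

lemma lGroup_not_mem (k h r : ℕ) (i o : Fin 2) (hio : i ≠ o) (x : LIdx k h 2)
    (hx : x ∈ lGroup k h r 2 i) : x ∉ lGroup k h r 2 o := by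
  have hvio : (i : ℕ) ≠ (o : ℕ) := fun hv => hio (Fin.ext hv)
  rw [mem_lGroup_iff] at hx
  rw [mem_lGroup_iff]
  rintro (rfl | ⟨t, rfl, ht⟩)
  · rcases hx with hx | ⟨t, hx, _⟩
    · exact hio (Sum.inr_injective hx).symm
    · exact (Sum.inr_ne_inl hx).elim
  · rcases hx with hx | ⟨t', hx, ht'⟩
    · exact (Sum.inr_ne_inl hx.symm).elim
    · obtain rfl : t' = t := Sum.inl_injective hx.symm
      have hi2 := i.2; have ho2 := o.2
      have e1 : ((i : ℕ) + 1) * r = (i : ℕ) * r + r := by ring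
      have e2 : ((o : ℕ) + 1) * r = (o : ℕ) * r + r := by ring
      interval_cases hiv : (i : ℕ) <;> interval_cases hov : (o : ℕ) <;> omega

lemma lGroup_cover (k h r : ℕ) (hkh : k + h = 2 * r) (x : LIdx k h 2) :
    x ∈ lGroup k h r 2 0 ∨ x ∈ lGroup k h r 2 1 := by
  rcases x with t | i
  · have ht := t.2
    by_cases hlt : (t : ℕ) < r
    · exact Or.inl ((mem_lGroup_iff _ _ _ _ _).2 (Or.inr ⟨t, rfl, by simp; omega⟩))
    · exact Or.inr ((mem_lGroup_iff _ _ _ _ _).2 (Or.inr ⟨t, rfl, by simp; omega⟩))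
  · have hi := i.2
    rcases (show (i:ℕ) = 0 ∨ (i:ℕ) = 1 from by omega) with h0 | h1
    · exact Or.inl ((mem_lGroup_iff _ _ _ _ _).2 (Or.inl (by rw [show i = 0 from Fin.ext h0])))
    · exact Or.inr ((mem_lGroup_iff _ _ _ _ _).2 (Or.inl (by rw [show i = 1 from Fin.ext h1])))

lemma inr_mem_lGroup (k h r : ℕ) (i : Fin 2) : Sum.inr i ∈ lGroup k h r 2 i :=
  (mem_lGroup_iff _ _ _ _ _).2 (Or.inl rfl)

lemma lCoord_mem_lGroup (k h r : ℕ) (hkh : k + h = 2 * r) (i : Fin 2) (j : Fin r) :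
    Sum.inl (lCoord k h r 2 hkh i j) ∈ lGroup k h r 2 i := by
  refine (mem_lGroup_iff _ _ _ _ _).2 (Or.inr ⟨_, rfl, ?_⟩)
  have hj := j.2
  have : ((i : ℕ) + 1) * r = (i : ℕ) * r + r := by ring
  simp [lCoord]; omega

/-- the transversal `E = univ \ {x₁, x₂}` satisfies the MRC hypotheses. -/
lemma E_spec (k h r : ℕ) (hkh : k + h = 2 * r) (x₁ x₂ : LIdx k h 2)
    (h₁ : x₁ ∈ lGroup k h r 2 0) (h₂ : x₂ ∈ lGroup k h r 2 1) :
    (Finset.univ \ {x₁, x₂}).card = k + h ∧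
    ∀ i : Fin 2, ((Finset.univ \ {x₁, x₂}) ∩ lGroup k h r 2 i).card = r := by
  classical
  have hne : x₁ ≠ x₂ := fun he =>
    lGroup_not_mem k h r 0 1 (by decide) x₁ h₁ (he ▸ h₂)
  have hcu : (Finset.univ : Finset (LIdx k h 2)).card = (k + h) + 2 := by
    simp [Fintype.card_sum]
  constructor
  · rw [Finset.card_sdiff_of_subset (Finset.subset_univ _), hcu, Finset.card_pair hne]
    omega
  · intro i
    have key : ∀ (xi xo : LIdx k h 2), xi ∈ lGroup k h r 2 i → xo ∉ lGroup k h r 2 i →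
        ((Finset.univ \ {xi, xo}) ∩ lGroup k h r 2 i).card = r ∧
        ((Finset.univ \ {xo, xi}) ∩ lGroup k h r 2 i).card = r := by
      intro xi xo hxi hxo
      have h12 : (Finset.univ \ {xi, xo}) ∩ lGroup k h r 2 i = (lGroup k h r 2 i).erase xi := by
        ext y
        simp only [Finset.mem_inter, Finset.mem_sdiff, Finset.mem_univ, true_and,
          Finset.mem_insert, Finset.mem_singleton, Finset.mem_erase]
        constructor
        · rintro ⟨hy, hyg⟩; exact ⟨fun he => hy (Or.inl he), hyg⟩
        · rintro ⟨hy, hyg⟩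
          refine ⟨fun hc => ?_, hyg⟩
          rcases hc with rfl | rfl
          · exact hy rfl
          · exact hxo hyg
      have h21 : (Finset.univ \ {xo, xi}) = (Finset.univ \ {xi, xo}) := by
        congr 1; ext y; simp; tauto
      rw [h21, h12, Finset.card_erase_of_mem hxi, card_lGroup k h r hkh]
      simp
    rcases (show (i:ℕ) = 0 ∨ (i:ℕ) = 1 from by omega) with h0 | h1
    · obtain rfl : i = 0 := Fin.ext h0
      exact (key x₁ x₂ h₁ (lGroup_not_mem k h r 1 0 (by decide) x₂ h₂)).1
    · obtain rfl : i = 1 := Fin.ext h1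
      exact (key x₂ x₁ h₂ (lGroup_not_mem k h r 0 1 (by decide) x₁ h₁)).2

/-- If `c ∈ C` vanishes everywhere except possibly at `xi ∈ S_i` and `xo ∈ S_o` (`i ≠ o`),
then `c` vanishes on all of `S_i`. -/
lemma zero_on_group (k h r : ℕ) (hkh : k + h = 2 * r) (F : Type) [Field F]
    (C : Submodule F (LIdx k h 2 → F)) (a : Fin 2 → Fin r → F) (ha : ∀ i j, a i j ≠ 0)
    (hloc : ∀ c ∈ C, ∀ i : Fin 2,
      c (Sum.inr i) = ∑ j : Fin r, a i j * c (Sum.inl (lCoord k h r 2 hkh i j)))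
    (i o : Fin 2) (hio : i ≠ o) (xi xo : LIdx k h 2) (hxi : xi ∈ lGroup k h r 2 i)
    (hxo : xo ∈ lGroup k h r 2 o) (c : LIdx k h 2 → F) (hc : c ∈ C)
    (hz : ∀ j, j ≠ xi → j ≠ xo → c j = 0) : ∀ y ∈ lGroup k h r 2 i, c y = 0 := by
  classical
  have hne_o : ∀ y ∈ lGroup k h r 2 i, y ≠ xo := by
    intro y hy he
    exact lGroup_not_mem k h r i o hio y hy (he ▸ hxo)
  have hparity_ne : (Sum.inr i : LIdx k h 2) ≠ xo := hne_o _ (inr_mem_lGroup k h r i)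
  rcases (mem_lGroup_iff k h r i xi).1 hxi with rfl | ⟨t, rfl, ht1, ht2⟩
  · -- xi is the parity coordinate
    have hdata : ∀ j : Fin r, c (Sum.inl (lCoord k h r 2 hkh i j)) = 0 := by
      intro j
      exact hz _ (by simp) (hne_o _ (lCoord_mem_lGroup k h r hkh i j))
    have hpar : c (Sum.inr i) = 0 := by
      rw [hloc c hc i]
      exact Finset.sum_eq_zero fun j _ => by rw [hdata j, mul_zero]
    intro y hy
    rcases (mem_lGroup_iff k h r i y).1 hy with rfl | ⟨t, rfl, ht⟩
    · exact hpar
    · exact hz _ (by simp) (hne_o _ hy)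
  · -- xi = Sum.inl t is a data coordinate
    have e1 : ((i : ℕ) + 1) * r = (i : ℕ) * r + r := by ring
    have hj0lt : (t : ℕ) - (i : ℕ) * r < r := by omega
    set j₀ : Fin r := ⟨(t : ℕ) - (i : ℕ) * r, hj0lt⟩ with hj₀def
    have hj₀ : lCoord k h r 2 hkh i j₀ = t := by
      apply Fin.ext
      simp [lCoord, hj₀def]
      omega
    have hdata : ∀ j : Fin r, j ≠ j₀ → c (Sum.inl (lCoord k h r 2 hkh i j)) = 0 := by
      intro j hj
      refine hz _ (fun he => ?_) (hne_o _ (lCoord_mem_lGroup k h r hkh i j))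
      have : lCoord k h r 2 hkh i j = t := Sum.inl_injective he
      apply hj
      apply Fin.ext
      have := congrArg Fin.val this
      simp [lCoord] at this ⊢
      have h4 : ((lCoord k h r 2 hkh i j : Fin (k + h)) : ℕ) = (i : ℕ) * r + (j : ℕ) := rfl
      have h6 : ((⟨(t : ℕ) - (i : ℕ) * r, hj0lt⟩ : Fin r) : ℕ) = (t : ℕ) - (i : ℕ) * r := rfl
      have h7 := congrArg Fin.val ‹lCoord k h r 2 hkh i j = t›
      omega
    have hpar : c (Sum.inr i) = 0 := hz _ (by simp) hparity_ne
    have hsum : c (Sum.inr i) = a i j₀ * c (Sum.inl (lCoord k h r 2 hkh i j₀)) := by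
      rw [hloc c hc i]
      exact Finset.sum_eq_single j₀
        (fun b _ hb => by rw [hdata b hb, mul_zero]) (by simp)
    have hxi0 : c (Sum.inl t) = 0 := by
      have := hsum.symm.trans hpar
      rcases mul_eq_zero.1 this with hA | hB
      · exact absurd hA (ha i j₀)
      · rwa [hj₀] at hB
    intro y hy
    rcases (mem_lGroup_iff k h r i y).1 hy with rfl | ⟨t', rfl, ht'⟩
    · exact hpar
    · by_cases he : t' = t
      · rw [he]; exact hxi0
      · exact hz _ (by simp [he]) (hne_o _ hy)

/-- Key dimension bound: if `D ≤ C` has support inside `W` and `K` is a `k`-subset of a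
transversal `E = univ \ {x₁, x₂}`, then `dim D ≤ |K ∩ W|`. -/
lemma dim_le_aux (k h r : ℕ) (hkh : k + h = 2 * r) (F : Type) [Field F] [Fintype F]
    [DecidableEq F]
    (C : Submodule F (LIdx k h 2 → F)) (a : Fin 2 → Fin r → F) (ha : ∀ i j, a i j ≠ 0)
    (hloc : ∀ c ∈ C, ∀ i : Fin 2,
      c (Sum.inr i) = ∑ j : Fin r, a i j * c (Sum.inl (lCoord k h r 2 hkh i j)))
    (hmrc : ∀ E : Finset (LIdx k h 2), E.card = k + h →
      (∀ i : Fin 2, (E ∩ lGroup k h r 2 i).card = r) →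
      Module.finrank F
          (C.map (LinearMap.funLeft F F (Subtype.val : ↥E → LIdx k h 2))) = k ∧
      ∀ y ∈ C.map (LinearMap.funLeft F F (Subtype.val : ↥E → LIdx k h 2)),
        y ≠ 0 → h + 1 ≤ hammingNorm y)
    (x₁ x₂ : LIdx k h 2) (h₁ : x₁ ∈ lGroup k h r 2 0) (h₂ : x₂ ∈ lGroup k h r 2 1)
    (D : Submodule F (LIdx k h 2 → F)) (hD : D ≤ C) (W K : Finset (LIdx k h 2))
    (hW : ∀ c ∈ D, ∀ j, c j ≠ 0 → j ∈ W)
    (hK : K ⊆ Finset.univ \ {x₁, x₂}) (hKcard : K.card = k) :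
    Module.finrank F D ≤ (K ∩ W).card := by
  classical
  set E : Finset (LIdx k h 2) := Finset.univ \ {x₁, x₂} with hE
  obtain ⟨hEcard, hEint⟩ := E_spec k h r hkh x₁ x₂ h₁ h₂
  obtain ⟨-, hdist⟩ := hmrc E hEcard hEint
  -- c ∈ C vanishing on K is zero
  have key : ∀ c ∈ C, (∀ j ∈ K, c j = 0) → c = 0 := by
    intro c hc hcK
    set y : ↥E → F := LinearMap.funLeft F F (Subtype.val : ↥E → LIdx k h 2) c with hy
    have hy_mem : y ∈ C.map (LinearMap.funLeft F F (Subtype.val : ↥E → LIdx k h 2)) :=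
      ⟨c, hc, rfl⟩
    have hnorm : hammingNorm y ≤ h := by
      have hsub : (Finset.univ.filter fun e : ↥E => y e ≠ 0).card ≤ (E \ K).card := by
        refine Finset.card_le_card_of_injOn (fun e => (e : LIdx k h 2)) ?_ ?_
        · intro e he
          simp only [Finset.coe_filter, Finset.mem_filter, Finset.mem_univ, true_and, Set.mem_setOf_eq] at he
          refine Finset.mem_sdiff.2 ⟨e.2, fun heK => he ?_⟩
          show c e.1 = 0
          exact hcK _ heK
        · exact Set.injOn_of_injective Subtype.val_injective
      have : (E \ K).card = h := by
        rw [Finset.card_sdiff_of_subset hK, hEcard, hKcard]; omega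
      calc hammingNorm y = (Finset.univ.filter fun e : ↥E => y e ≠ 0).card := rfl
        _ ≤ (E \ K).card := hsub
        _ = h := this
    have hy0 : y = 0 := by
      by_contra hne
      have := hdist y hy_mem hne
      omega
    have hvanish : ∀ j, j ≠ x₁ → j ≠ x₂ → c j = 0 := by
      intro j hj1 hj2
      have hjE : j ∈ E := by
        rw [hE, Finset.mem_sdiff]
        simp [hj1, hj2]
      have := congrFun hy0 ⟨j, hjE⟩
      exact this
    funext j
    show c j = 0
    rcases lGroup_cover k h r hkh j with hj | hj
    · exact zero_on_group k h r hkh F C a ha hloc 0 1 (by decide) x₁ x₂ h₁ h₂ c hc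
        hvanish j hj
    · exact zero_on_group k h r hkh F C a ha hloc 1 0 (by decide) x₂ x₁ h₂ h₁ c hc
        (fun j hj2 hj1 => hvanish j hj1 hj2) j hj
  -- the restriction map to K ∩ W is injective on D
  set φ : ↥D →ₗ[F] (↥(K ∩ W) → F) :=
    (LinearMap.funLeft F F (Subtype.val : ↥(K ∩ W) → LIdx k h 2)).comp D.subtype with hφ
  have hinj : Function.Injective φ := by
    rw [← LinearMap.ker_eq_bot, LinearMap.ker_eq_bot']
    intro d hd0
    have hzero : ∀ j ∈ K, (d : LIdx k h 2 → F) j = 0 := by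
      intro j hjK
      by_cases hjW : j ∈ W
      · exact congrFun hd0 ⟨j, Finset.mem_inter.2 ⟨hjK, hjW⟩⟩
      · by_contra hne
        exact hjW (hW _ d.2 j hne)
    have : (d : LIdx k h 2 → F) = 0 := key _ (hD d.2) hzero
    exact Subtype.ext this
  have := LinearMap.finrank_le_finrank_of_injective hinj
  rwa [Module.finrank_pi, Fintype.card_coe] at this


/-- Core lower bound: `h + dim D ≤ |W ∩ E|` for any transversal `E = univ \ {x₁, x₂}`. -/
lemma low_aux (k h r : ℕ) (hkh : k + h = 2 * r) (F : Type) [Field F] [Fintype F]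
    [DecidableEq F]
    (C : Submodule F (LIdx k h 2 → F)) (a : Fin 2 → Fin r → F) (ha : ∀ i j, a i j ≠ 0)
    (hloc : ∀ c ∈ C, ∀ i : Fin 2,
      c (Sum.inr i) = ∑ j : Fin r, a i j * c (Sum.inl (lCoord k h r 2 hkh i j)))
    (hmrc : ∀ E : Finset (LIdx k h 2), E.card = k + h →
      (∀ i : Fin 2, (E ∩ lGroup k h r 2 i).card = r) →
      Module.finrank F
          (C.map (LinearMap.funLeft F F (Subtype.val : ↥E → LIdx k h 2))) = k ∧
      ∀ y ∈ C.map (LinearMap.funLeft F F (Subtype.val : ↥E → LIdx k h 2)),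
        y ≠ 0 → h + 1 ≤ hammingNorm y)
    (x₁ x₂ : LIdx k h 2) (h₁ : x₁ ∈ lGroup k h r 2 0) (h₂ : x₂ ∈ lGroup k h r 2 1)
    (D : Submodule F (LIdx k h 2 → F)) (hD : D ≤ C) (hs : 1 ≤ Module.finrank F D)
    (W : Finset (LIdx k h 2)) (hW : ∀ c ∈ D, ∀ j, c j ≠ 0 → j ∈ W) :
    h + Module.finrank F D ≤ (W ∩ (Finset.univ \ {x₁, x₂})).card := by
  classical
  set s := Module.finrank F D with hsdef
  set E : Finset (LIdx k h 2) := Finset.univ \ {x₁, x₂} with hE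
  have hEcard : E.card = k + h := (E_spec k h r hkh x₁ x₂ h₁ h₂).1
  have hpart : (E \ W).card + (E ∩ W).card = E.card := Finset.card_sdiff_add_card_inter E W
  by_cases hcase : k ≤ (E \ W).card
  · obtain ⟨K, hKsub, hKcard⟩ := Finset.exists_subset_card_eq (s := E \ W) (n := k) hcase
    have hdim := dim_le_aux k h r hkh F C a ha hloc hmrc x₁ x₂ h₁ h₂ D hD W K hW
      (hKsub.trans (Finset.sdiff_subset)) hKcard
    have : K ∩ W = ∅ := by
      apply Finset.eq_empty_of_forall_notMem
      intro x hx
      rcases Finset.mem_inter.1 hx with ⟨hxK, hxW⟩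
      exact (Finset.mem_sdiff.1 (hKsub hxK)).2 hxW
    rw [this, Finset.card_empty] at hdim
    omega
  · push_neg at hcase
    have hB : k - (E \ W).card ≤ (E ∩ W).card := by omega
    obtain ⟨B, hBsub, hBcard⟩ := Finset.exists_subset_card_eq (s := E ∩ W) (n := k - (E \ W).card) hB
    set K := (E \ W) ∪ B with hK
    have hKsub : K ⊆ E := Finset.union_subset Finset.sdiff_subset
      (hBsub.trans Finset.inter_subset_left)
    have hdisj : Disjoint (E \ W) B := by
      rw [Finset.disjoint_left]
      intro x hx hxB
      exact (Finset.mem_sdiff.1 hx).2 (Finset.mem_inter.1 (hBsub hxB)).2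
    have hKcard : K.card = k := by
      rw [hK, Finset.card_union_of_disjoint hdisj, hBcard]
      omega
    have hdim := dim_le_aux k h r hkh F C a ha hloc hmrc x₁ x₂ h₁ h₂ D hD W K hW hKsub hKcard
    have hKW : K ∩ W ⊆ B := by
      intro x hx
      rcases Finset.mem_inter.1 hx with ⟨hxK, hxW⟩
      rcases Finset.mem_union.1 hxK with hx1 | hx2
      · exact absurd hxW (Finset.mem_sdiff.1 hx1).2
      · exact hx2
    have := Finset.card_le_card hKW
    rw [Finset.inter_comm]
    omega

/-- The shortened code: codewords of `C` vanishing on `V`. -/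
noncomputable def shortC {F : Type} [Field F] {n : Type} [Fintype n] [DecidableEq n]
    (C : Submodule F (n → F)) (V : Finset n) : Submodule F (n → F) :=
  Submodule.map C.subtype
    (LinearMap.ker ((LinearMap.funLeft F F (Subtype.val : ↥V → n)).comp C.subtype))

lemma shortC_le {F : Type} [Field F] {n : Type} [Fintype n] [DecidableEq n]
    (C : Submodule F (n → F)) (V : Finset n) : shortC C V ≤ C :=
  Submodule.map_subtype_le _ _

lemma mem_shortC {F : Type} [Field F] {n : Type} [Fintype n] [DecidableEq n]
    (C : Submodule F (n → F)) (V : Finset n) (c : n → F) :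
    c ∈ shortC C V ↔ c ∈ C ∧ ∀ j ∈ V, c j = 0 := by
  constructor
  · rintro ⟨⟨c', hc'⟩, hker, rfl⟩
    refine ⟨hc', fun j hj => ?_⟩
    simp only [SetLike.mem_coe, LinearMap.mem_ker] at hker
    exact congrFun hker ⟨j, hj⟩
  · rintro ⟨hcC, hcV⟩
    refine ⟨⟨c, hcC⟩, ?_, rfl⟩
    simp only [SetLike.mem_coe, LinearMap.mem_ker]
    funext j
    exact hcV j j.2

lemma finrank_shortC {F : Type} [Field F] {n : Type} [Fintype n] [DecidableEq n]
    (C : Submodule F (n → F)) (V : Finset n) :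
    Module.finrank F C ≤ Module.finrank F (shortC C V) + V.card := by
  classical
  set ψ := (LinearMap.funLeft F F (Subtype.val : ↥V → n)).comp C.subtype with hψ
  have hrn := LinearMap.finrank_range_add_finrank_ker ψ
  have hrange : Module.finrank F (LinearMap.range ψ) ≤ V.card := by
    have := Submodule.finrank_le (LinearMap.range ψ)
    rwa [Module.finrank_pi, Fintype.card_coe] at this
  have hker : Module.finrank F (LinearMap.ker ψ) = Module.finrank F (shortC C V) :=
    LinearEquiv.finrank_eq
      (Submodule.equivMapOfInjective C.subtype (Submodule.injective_subtype C) _)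
  omega

/-- the generalized Hamming weights of a `(k,r,h)` local MRC with two local
groups (`k + h = 2r`, `r + 1 ≤ k < 2r`, `n = 2r + 2`) are `d_s = h + 1 + s` for
`1 ≤ s ≤ r - h` and `d_s = h + 2 + s` for `r - h + 1 ≤ s ≤ 2r - h`. -/
theorem stmt_13 (k h r : ℕ) (hkh : k + h = 2 * r) (hk1 : r + 1 ≤ k) (hk2 : k < 2 * r)
    (F : Type) [Field F] [Fintype F] [DecidableEq F]
    (C : Submodule F (LIdx k h 2 → F))
    (hsys : ∀ x : Fin k → F, ∃! c : LIdx k h 2 → F,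
      c ∈ C ∧ ∀ j : Fin k, c (Sum.inl (Fin.castLE (Nat.le_add_right k h) j)) = x j)
    (a : Fin 2 → Fin r → F) (ha : ∀ i j, a i j ≠ 0)
    (hloc : ∀ c ∈ C, ∀ i : Fin 2,
      c (Sum.inr i) = ∑ j : Fin r, a i j * c (Sum.inl (lCoord k h r 2 hkh i j)))
    (hmrc : ∀ E : Finset (LIdx k h 2), E.card = k + h →
      (∀ i : Fin 2, (E ∩ lGroup k h r 2 i).card = r) →
      Module.finrank F
          (C.map (LinearMap.funLeft F F (Subtype.val : ↥E → LIdx k h 2))) = k ∧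
      ∀ y ∈ C.map (LinearMap.funLeft F F (Subtype.val : ↥E → LIdx k h 2)),
        y ≠ 0 → h + 1 ≤ hammingNorm y)
    (d : ℕ → ℕ)
    (hd : ∀ s, 1 ≤ s → s ≤ 2 * r - h →
      IsLeast {w | ∃ D : Submodule F (LIdx k h 2 → F), D ≤ C ∧ Module.finrank F D = s ∧
        Set.ncard {j : LIdx k h 2 | ∃ c ∈ D, c j ≠ 0} = w} (d s)) :
    (∀ s, 1 ≤ s → s ≤ r - h → d s = h + 1 + s) ∧
    (∀ s, r - h + 1 ≤ s → s ≤ 2 * r - h → d s = h + 2 + s) := by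
  classical
  have hh1 : 1 ≤ h := by omega
  have hhr : h + 1 ≤ r := by omega
  -- `C` has dimension `k`
  have hfinC : Module.finrank F C = k := by
    set g : Fin k → LIdx k h 2 := fun j => Sum.inl (Fin.castLE (Nat.le_add_right k h) j)
      with hg
    set φ : ↥C →ₗ[F] (Fin k → F) := (LinearMap.funLeft F F g).comp C.subtype with hφ
    have hinj : Function.Injective φ := by
      intro c₁ c₂ hcc
      obtain ⟨u, hu, huniq⟩ := hsys (φ c₁)
      have e1 : (c₁ : LIdx k h 2 → F) = u := huniq _ ⟨c₁.2, fun j => rfl⟩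
      have e2 : (c₂ : LIdx k h 2 → F) = u := huniq _ ⟨c₂.2, fun j => congrFun hcc.symm j⟩
      exact Subtype.ext (e1.trans e2.symm)
    have hsurj : Function.Surjective φ := by
      intro x
      obtain ⟨c, ⟨hcC, hcx⟩, -⟩ := hsys x
      exact ⟨⟨c, hcC⟩, funext hcx⟩
    have := LinearEquiv.finrank_eq (LinearEquiv.ofBijective φ ⟨hinj, hsurj⟩)
    rw [this, Module.finrank_pi, Fintype.card_fin]
  -- lower bound claims
  have claim1 : ∀ D : Submodule F (LIdx k h 2 → F), D ≤ C → 1 ≤ Module.finrank F D →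
      ∀ W : Finset (LIdx k h 2), (∀ c ∈ D, ∀ j, c j ≠ 0 → j ∈ W) →
      h + Module.finrank F D + 1 ≤ W.card := by
    intro D hD hs W hW
    have hnz : ∃ c ∈ D, c ≠ 0 := by
      have : Nontrivial ↥D := by
        apply Module.nontrivial_of_finrank_pos (R := F)
        omega
      obtain ⟨d₀, hd₀⟩ := exists_ne (0 : ↥D)
      refine ⟨d₀.1, d₀.2, fun h0 => hd₀ (Subtype.ext h0)⟩
    obtain ⟨c, hcD, hc0⟩ := hnz
    have : ∃ j, c j ≠ 0 := by
      by_contra hall; push_neg at hall; exact hc0 (funext hall)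
    obtain ⟨j₀, hj₀⟩ := this
    have hj₀W : j₀ ∈ W := hW c hcD j₀ hj₀
    have hWpos : 1 ≤ W.card := Finset.card_pos.2 ⟨j₀, hj₀W⟩
    rcases lGroup_cover k h r hkh j₀ with hj | hj
    · have hlow := low_aux k h r hkh F C a ha hloc hmrc j₀ (Sum.inr 1) hj
        (inr_mem_lGroup k h r 1) D hD hs W hW
      have hsub : W ∩ (Finset.univ \ {j₀, Sum.inr 1}) ⊆ W.erase j₀ := by
        intro x hx
        rcases Finset.mem_inter.1 hx with ⟨hxW, hxE⟩
        rcases Finset.mem_sdiff.1 hxE with ⟨-, hxne⟩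
        refine Finset.mem_erase.2 ⟨fun he => hxne ?_, hxW⟩
        simp [he]
      have hcc := Finset.card_le_card hsub
      rw [Finset.card_erase_of_mem hj₀W] at hcc
      omega
    · have hlow := low_aux k h r hkh F C a ha hloc hmrc (Sum.inr 0) j₀
        (inr_mem_lGroup k h r 0) hj D hD hs W hW
      have hsub : W ∩ (Finset.univ \ {Sum.inr 0, j₀}) ⊆ W.erase j₀ := by
        intro x hx
        rcases Finset.mem_inter.1 hx with ⟨hxW, hxE⟩
        rcases Finset.mem_sdiff.1 hxE with ⟨-, hxne⟩
        refine Finset.mem_erase.2 ⟨fun he => hxne ?_, hxW⟩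
        simp [he]
      have hcc := Finset.card_le_card hsub
      rw [Finset.card_erase_of_mem hj₀W] at hcc
      omega
  have claim2 : ∀ D : Submodule F (LIdx k h 2 → F), D ≤ C →
      r - h + 1 ≤ Module.finrank F D →
      ∀ W : Finset (LIdx k h 2), (∀ c ∈ D, ∀ j, c j ≠ 0 → j ∈ W) →
      h + Module.finrank F D + 2 ≤ W.card := by
    intro D hD hs W hW
    have hs1 : 1 ≤ Module.finrank F D := by omega
    have h1 := claim1 D hD hs1 W hW
    have hWbig : r + 2 ≤ W.card := by omega
    have hx₁ : ∃ x ∈ W, x ∈ lGroup k h r 2 0 := by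
      by_contra hno; push_neg at hno
      have hsub : W ⊆ lGroup k h r 2 1 := fun x hx =>
        (lGroup_cover k h r hkh x).resolve_left (hno x hx)
      have := Finset.card_le_card hsub
      rw [card_lGroup k h r hkh] at this
      omega
    have hx₂ : ∃ x ∈ W, x ∈ lGroup k h r 2 1 := by
      by_contra hno; push_neg at hno
      have hsub : W ⊆ lGroup k h r 2 0 := fun x hx =>
        (lGroup_cover k h r hkh x).resolve_right (hno x hx)
      have := Finset.card_le_card hsub
      rw [card_lGroup k h r hkh] at this
      omega
    obtain ⟨x₁, hx₁W, hx₁S⟩ := hx₁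
    obtain ⟨x₂, hx₂W, hx₂S⟩ := hx₂
    have hne : x₁ ≠ x₂ := fun he =>
      lGroup_not_mem k h r 0 1 (by decide) x₁ hx₁S (he ▸ hx₂S)
    have hlow := low_aux k h r hkh F C a ha hloc hmrc x₁ x₂ hx₁S hx₂S D hD hs1 W hW
    have hsub : W ∩ (Finset.univ \ {x₁, x₂}) ⊆ (W.erase x₁).erase x₂ := by
      intro x hx
      rcases Finset.mem_inter.1 hx with ⟨hxW, hxE⟩
      rcases Finset.mem_sdiff.1 hxE with ⟨-, hxne⟩
      have hne1 : x ≠ x₁ := fun he => hxne (by simp [he])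
      have hne2 : x ≠ x₂ := fun he => hxne (by simp [he])
      exact Finset.mem_erase.2 ⟨hne2, Finset.mem_erase.2 ⟨hne1, hxW⟩⟩
    have hcc := Finset.card_le_card hsub
    rw [Finset.card_erase_of_mem (Finset.mem_erase.2 ⟨hne.symm, hx₂W⟩),
      Finset.card_erase_of_mem hx₁W] at hcc
    omega
  -- construction for part 1
  have constr1 : ∀ s, 1 ≤ s → s ≤ r - h →
      ∃ D : Submodule F (LIdx k h 2 → F), D ≤ C ∧ Module.finrank F D = s ∧
        Set.ncard {j : LIdx k h 2 | ∃ c ∈ D, c j ≠ 0} = h + 1 + s := by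
    intro s hs1 hs2
    have hsk : s + h ≤ r := by omega
    set Z : Finset (LIdx k h 2) :=
      (Finset.univ.filter fun t : Fin (k + h) => s + h ≤ (t : ℕ) ∧ (t : ℕ) < k + h).image
        Sum.inl with hZ
    have hZcard : Z.card = k - s := by
      rw [hZ, Finset.card_image_of_injective _ Sum.inl_injective, card_Ico' _ _ _ le_rfl]
      omega
    set D := shortC C Z with hDdef
    have hDle : D ≤ C := shortC_le C Z
    have hDz : ∀ c ∈ D, ∀ t : Fin (k + h), s + h ≤ (t : ℕ) → c (Sum.inl t) = 0 := by
      intro c hc t ht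
      exact ((mem_shortC C Z c).1 hc).2 _
        (Finset.mem_image_of_mem _ (Finset.mem_filter.2 ⟨Finset.mem_univ _, ht, t.2⟩))
    set W₁ : Finset (LIdx k h 2) :=
      insert (Sum.inr 0)
        ((Finset.univ.filter fun t : Fin (k + h) => 0 ≤ (t : ℕ) ∧ (t : ℕ) < s + h).image
          Sum.inl) with hW₁
    have hW₁card : W₁.card = s + h + 1 := by
      rw [hW₁, Finset.card_insert_of_notMem (by simp),
        Finset.card_image_of_injective _ Sum.inl_injective, card_Ico' _ _ _ (by omega)]
      omega
    have hsupp : ∀ c ∈ D, ∀ j, c j ≠ 0 → j ∈ W₁ := by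
      intro c hcD j hcj
      have hcC : c ∈ C := hDle hcD
      by_contra hjW
      apply hcj
      rcases j with t | i
      · have htge : s + h ≤ (t : ℕ) := by
          by_contra hlt
          exact hjW (by
            rw [hW₁]
            exact Finset.mem_insert_of_mem (Finset.mem_image_of_mem _
              (Finset.mem_filter.2 ⟨Finset.mem_univ _, by omega⟩)))
        exact hDz c hcD t htge
      · obtain rfl | rfl : i = 0 ∨ i = 1 := by
          rcases (show (i : ℕ) = 0 ∨ (i : ℕ) = 1 from by omega) with h0 | h1
          exacts [Or.inl (Fin.ext h0), Or.inr (Fin.ext h1)]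
        · exact absurd (by rw [hW₁]; exact Finset.mem_insert_self _ _) hjW
        · rw [hloc c hcC 1]
          apply Finset.sum_eq_zero
          intro j' _
          have hco : ((lCoord k h r 2 hkh 1 j') : ℕ) = r + (j' : ℕ) := by
            simp [lCoord]
          rw [hDz c hcD _ (by omega), mul_zero]
    have hdim_ge : s ≤ Module.finrank F D := by
      have := finrank_shortC C Z
      rw [hfinC, hZcard, ← hDdef] at this
      omega
    have hdim_le : Module.finrank F D ≤ s := by
      set K : Finset (LIdx k h 2) :=
        (Finset.univ.filter fun t : Fin (k + h) =>
          (0 ≤ (t : ℕ) ∧ (t : ℕ) < s) ∨ (s + h ≤ (t : ℕ) ∧ (t : ℕ) < k + h)).image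
          Sum.inl with hKdef
      have hKcard : K.card = k := by
        rw [hKdef, Finset.card_image_of_injective _ Sum.inl_injective, Finset.filter_or,
          Finset.card_union_of_disjoint (by
            rw [Finset.disjoint_left]
            intro x hx1 hx2
            rw [Finset.mem_filter] at hx1 hx2
            omega),
          card_Ico' _ _ _ (by omega), card_Ico' _ _ _ le_rfl]
        omega
      have hKsub : K ⊆ Finset.univ \ {Sum.inr 0, Sum.inr 1} := by
        intro x hx
        rw [hKdef] at hx
        obtain ⟨t, -, rfl⟩ := Finset.mem_image.1 hx
        simp
      have hKW : K ∩ W₁ ⊆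
          (Finset.univ.filter fun t : Fin (k + h) => 0 ≤ (t : ℕ) ∧ (t : ℕ) < s).image
            Sum.inl := by
        intro x hx
        rcases Finset.mem_inter.1 hx with ⟨hxK, hxW⟩
        rw [hKdef] at hxK
        obtain ⟨t, htm, rfl⟩ := Finset.mem_image.1 hxK
        rw [Finset.mem_filter] at htm
        rw [hW₁] at hxW
        rcases Finset.mem_insert.1 hxW with he | hxW'
        · exact absurd he (by simp)
        · obtain ⟨t', ht'm, ht'e⟩ := Finset.mem_image.1 hxW'
          obtain rfl : t' = t := Sum.inl_injective ht'e
          rw [Finset.mem_filter] at ht'm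
          exact Finset.mem_image_of_mem _ (Finset.mem_filter.2 ⟨Finset.mem_univ _, by omega⟩)
      have hcard : (K ∩ W₁).card ≤ s := by
        have h1 := Finset.card_le_card hKW
        rw [Finset.card_image_of_injective _ Sum.inl_injective,
          card_Ico' _ _ _ (by omega)] at h1
        omega
      exact (dim_le_aux k h r hkh F C a ha hloc hmrc (Sum.inr 0) (Sum.inr 1)
        (inr_mem_lGroup k h r 0) (inr_mem_lGroup k h r 1) D hDle W₁ K hsupp hKsub
        hKcard).trans hcard
    have hdim : Module.finrank F D = s := le_antisymm hdim_le hdim_ge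
    set Wf : Finset (LIdx k h 2) := Finset.univ.filter (fun j => ∃ c ∈ D, c j ≠ 0) with hWf
    have hset : {j : LIdx k h 2 | ∃ c ∈ D, c j ≠ 0} = ↑Wf := by
      ext j; simp [hWf]
    have hWfsupp : ∀ c ∈ D, ∀ j, c j ≠ 0 → j ∈ Wf := by
      intro c hc j hj
      rw [hWf, Finset.mem_filter]
      exact ⟨Finset.mem_univ _, c, hc, hj⟩
    have hWfsub : Wf ⊆ W₁ := by
      intro j hj
      rw [hWf, Finset.mem_filter] at hj
      obtain ⟨-, c, hc, hj⟩ := hj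
      exact hsupp c hc j hj
    have hge := claim1 D hDle (by omega) Wf hWfsupp
    have hle := Finset.card_le_card hWfsub
    rw [hdim] at hge
    refine ⟨D, hDle, hdim, ?_⟩
    rw [hset, Set.ncard_coe_finset]
    omega
  -- construction for part 2
  have constr2 : ∀ s, r - h + 1 ≤ s → s ≤ 2 * r - h →
      ∃ D : Submodule F (LIdx k h 2 → F), D ≤ C ∧ Module.finrank F D = s ∧
        Set.ncard {j : LIdx k h 2 | ∃ c ∈ D, c j ≠ 0} = h + 2 + s := by
    intro s hs1 hs2
    set Z : Finset (LIdx k h 2) :=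
      (Finset.univ.filter fun t : Fin (k + h) =>
        r ≤ (t : ℕ) ∧ (t : ℕ) < r + (k - s)).image Sum.inl with hZ
    have hZcard : Z.card = k - s := by
      rw [hZ, Finset.card_image_of_injective _ Sum.inl_injective,
        card_Ico' _ _ _ (by omega)]
      omega
    set D := shortC C Z with hDdef
    have hDle : D ≤ C := shortC_le C Z
    set W₂ : Finset (LIdx k h 2) := Finset.univ \ Z with hW₂
    have hW₂card : W₂.card = h + s + 2 := by
      rw [hW₂, Finset.card_sdiff_of_subset (Finset.subset_univ _), hZcard]
      have hcu : (Finset.univ : Finset (LIdx k h 2)).card = (k + h) + 2 := by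
        simp [Fintype.card_sum]
      omega
    have hsupp : ∀ c ∈ D, ∀ j, c j ≠ 0 → j ∈ W₂ := by
      intro c hcD j hcj
      rw [hW₂, Finset.mem_sdiff]
      exact ⟨Finset.mem_univ _, fun hjZ => hcj (((mem_shortC C Z c).1 hcD).2 j hjZ)⟩
    have hdim_ge : s ≤ Module.finrank F D := by
      have := finrank_shortC C Z
      rw [hfinC, hZcard, ← hDdef] at this
      omega
    have hdim_le : Module.finrank F D ≤ s := by
      set K : Finset (LIdx k h 2) :=
        (Finset.univ.filter fun t : Fin (k + h) =>
          (0 ≤ (t : ℕ) ∧ (t : ℕ) < r - h) ∨ (r ≤ (t : ℕ) ∧ (t : ℕ) < k + h)).image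
          Sum.inl with hKdef
      have hKcard : K.card = k := by
        rw [hKdef, Finset.card_image_of_injective _ Sum.inl_injective, Finset.filter_or,
          Finset.card_union_of_disjoint (by
            rw [Finset.disjoint_left]
            intro x hx1 hx2
            rw [Finset.mem_filter] at hx1 hx2
            omega),
          card_Ico' _ _ _ (by omega), card_Ico' _ _ _ le_rfl]
        omega
      have hKsub : K ⊆ Finset.univ \ {Sum.inr 0, Sum.inr 1} := by
        intro x hx
        rw [hKdef] at hx
        obtain ⟨t, -, rfl⟩ := Finset.mem_image.1 hx
        simp
      have hKW : K ∩ W₂ ⊆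
          (Finset.univ.filter fun t : Fin (k + h) =>
            (0 ≤ (t : ℕ) ∧ (t : ℕ) < r - h) ∨
              (r + (k - s) ≤ (t : ℕ) ∧ (t : ℕ) < k + h)).image Sum.inl := by
        intro x hx
        rcases Finset.mem_inter.1 hx with ⟨hxK, hxW⟩
        rw [hKdef] at hxK
        obtain ⟨t, htm, rfl⟩ := Finset.mem_image.1 hxK
        rw [Finset.mem_filter] at htm
        rw [hW₂, Finset.mem_sdiff] at hxW
        have htZ : ¬(r ≤ (t : ℕ) ∧ (t : ℕ) < r + (k - s)) := by
          intro hcond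
          exact hxW.2 (by
            rw [hZ]
            exact Finset.mem_image_of_mem _
              (Finset.mem_filter.2 ⟨Finset.mem_univ _, hcond⟩))
        exact Finset.mem_image_of_mem _ (Finset.mem_filter.2 ⟨Finset.mem_univ _, by omega⟩)
      have hcard : (K ∩ W₂).card ≤ s := by
        have h1 := Finset.card_le_card hKW
        rw [Finset.filter_or] at h1
        have h2 := Finset.card_union_le
          (Finset.univ.filter fun t : Fin (k + h) => 0 ≤ (t : ℕ) ∧ (t : ℕ) < r - h)
          (Finset.univ.filter fun t : Fin (k + h) =>
            r + (k - s) ≤ (t : ℕ) ∧ (t : ℕ) < k + h)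
        rw [Finset.card_image_of_injective _ Sum.inl_injective] at h1
        rw [card_Ico' _ _ _ (by omega), card_Ico' _ _ _ le_rfl] at h2
        omega
      exact (dim_le_aux k h r hkh F C a ha hloc hmrc (Sum.inr 0) (Sum.inr 1)
        (inr_mem_lGroup k h r 0) (inr_mem_lGroup k h r 1) D hDle W₂ K hsupp hKsub
        hKcard).trans hcard
    have hdim : Module.finrank F D = s := le_antisymm hdim_le hdim_ge
    set Wf : Finset (LIdx k h 2) := Finset.univ.filter (fun j => ∃ c ∈ D, c j ≠ 0) with hWf
    have hset : {j : LIdx k h 2 | ∃ c ∈ D, c j ≠ 0} = ↑Wf := by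
      ext j; simp [hWf]
    have hWfsupp : ∀ c ∈ D, ∀ j, c j ≠ 0 → j ∈ Wf := by
      intro c hc j hj
      rw [hWf, Finset.mem_filter]
      exact ⟨Finset.mem_univ _, c, hc, hj⟩
    have hWfsub : Wf ⊆ W₂ := by
      intro j hj
      rw [hWf, Finset.mem_filter] at hj
      obtain ⟨-, c, hc, hj⟩ := hj
      exact hsupp c hc j hj
    have hge := claim2 D hDle (by omega) Wf hWfsupp
    have hle := Finset.card_le_card hWfsub
    rw [hdim] at hge
    refine ⟨D, hDle, hdim, ?_⟩
    rw [hset, Set.ncard_coe_finset]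
    omega
  constructor
  · intro s hs1 hs2
    have hs2' : s ≤ 2 * r - h := by omega
    obtain ⟨hmem, hlb⟩ := hd s hs1 hs2'
    have hle : d s ≤ h + 1 + s := hlb (constr1 s hs1 hs2)
    obtain ⟨D', hD'le, hD'dim, hD'n⟩ := hmem
    set Wf : Finset (LIdx k h 2) := Finset.univ.filter (fun j => ∃ c ∈ D', c j ≠ 0) with hWf
    have hset : {j : LIdx k h 2 | ∃ c ∈ D', c j ≠ 0} = ↑Wf := by
      ext j; simp [hWf]
    have hWfsupp : ∀ c ∈ D', ∀ j, c j ≠ 0 → j ∈ Wf := by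
      intro c hc j hj
      rw [hWf, Finset.mem_filter]
      exact ⟨Finset.mem_univ _, c, hc, hj⟩
    have hge := claim1 D' hD'le (hs1.trans_eq hD'dim.symm) Wf hWfsupp
    rw [hset, Set.ncard_coe_finset] at hD'n
    rw [hD'dim] at hge
    omega
  · intro s hs1 hs2
    obtain ⟨hmem, hlb⟩ := hd s (by omega) hs2
    have hle : d s ≤ h + 2 + s := hlb (constr2 s hs1 hs2)
    obtain ⟨D', hD'le, hD'dim, hD'n⟩ := hmem
    set Wf : Finset (LIdx k h 2) := Finset.univ.filter (fun j => ∃ c ∈ D', c j ≠ 0) with hWf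
    have hset : {j : LIdx k h 2 | ∃ c ∈ D', c j ≠ 0} = ↑Wf := by
      ext j; simp [hWf]
    have hWfsupp : ∀ c ∈ D', ∀ j, c j ≠ 0 → j ∈ Wf := by
      intro c hc j hj
      rw [hWf, Finset.mem_filter]
      exact ⟨Finset.mem_univ _, c, hc, hj⟩
    have hge := claim2 D' hD'le (hs1.trans_eq hD'dim.symm) Wf hWfsupp
    rw [hset, Set.ncard_coe_finset] at hD'n
    rw [hD'dim] at hge
    omega
end

section
/- For any [n,k] linear code C over a finite field F_q with q elements and any 1 ≤ s ≤ k, the s-th higher support weight enumerator polynomial satisfies W_C^{(s)}(Z) = sum over all subsets U of {1,...,n} of Z^{n-|U|} (1-Z)^{|U|} · [k - ρ(U) choose s]_q, as an identity of polynomials in the variable Z with rational coefficients. Moreover, since [k - ρ(U) choose s]_q = 0 whenever |U| ≥ n - d_s + 1, the sum may be restricted to subsets U with |U| ≤ n - d_s, where d_s is the s-th generalized Hamming weight of C. -/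
open Polynomial Finset

/-- The Gaussian binomial coefficient `[t choose s]_q = ∏_{i=0}^{s-1} (q^t - q^i)/(q^s - q^i)`,
taken to be `0` when `t < s`. -/
def gbinom (q t s : ℕ) : ℚ :=
  if s ≤ t then
    (∏ i ∈ Finset.range s, ((q : ℚ) ^ t - (q : ℚ) ^ i)) /
      (∏ i ∈ Finset.range s, ((q : ℚ) ^ s - (q : ℚ) ^ i))
  else 0

open Module

section Aux
variable {F V : Type*} [Field F] [Fintype F] [AddCommGroup V] [Module F V] [Finite V]

/-- vectors lying in `D` with independent coordinates vs independent tuples valued in `D` -/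
noncomputable def fiberEquiv (s : ℕ) (D : Submodule F V) (hD : finrank F ↥D = s) :
    {v : {v : Fin s → V // LinearIndependent F v} // Submodule.span F (Set.range v.1) = D} ≃
      {w : Fin s → ↥D // LinearIndependent F w} where
  toFun v := ⟨fun i => ⟨v.1.1 i, (le_of_eq v.2) (Submodule.subset_span ⟨i, rfl⟩)⟩,
    LinearIndependent.of_comp D.subtype v.1.2⟩
  invFun w := by
    haveI : Module.Finite F V := Module.Finite.of_finite
    have hli : LinearIndependent F (fun i => (w.1 i : V)) :=
      w.2.map' D.subtype (Submodule.ker_subtype D)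
    refine ⟨⟨fun i => (w.1 i : V), hli⟩, ?_⟩
    refine Submodule.eq_of_le_of_finrank_le ?_ ?_
    · rw [Submodule.span_le]; rintro _ ⟨i, rfl⟩; exact (w.1 i).2
    · rw [hD, finrank_span_eq_card hli, Fintype.card_fin]
  left_inv v := rfl
  right_inv w := rfl

lemma card_grass (s : ℕ) :
    (Nat.card {D : Submodule F V // finrank F ↥D = s} : ℚ) =
      gbinom (Fintype.card F) (finrank F V) s := by
  classical
  haveI : Module.Finite F V := Module.Finite.of_finite
  haveI : Finite (Submodule F V) := Finite.of_injective _ SetLike.coe_injective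
  haveI := Fintype.ofFinite (Submodule F V)
  haveI := Fintype.ofFinite V
  set q := Fintype.card F with hqdef
  set t := finrank F V with htdef
  have hq1 : 1 < q := Fintype.one_lt_card
  by_cases hst : s ≤ t
  · -- fiber cardinality
    have fiber : ∀ D : Submodule F V, finrank F ↥D = s →
        Fintype.card {w : Fin s → ↥D // LinearIndependent F w} =
          ∏ i ∈ Finset.range s, (q ^ s - q ^ i) := by
      intro D hD
      rw [← Nat.card_eq_fintype_card, card_linearIndependent (le_of_eq hD.symm), hD,
        ← Fin.prod_univ_eq_prod_range]
    have h1 : Fintype.card {v : Fin s → V // LinearIndependent F v} =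
        ∏ i ∈ Finset.range s, (q ^ t - q ^ i) := by
      rw [← Nat.card_eq_fintype_card, card_linearIndependent hst, ← Fin.prod_univ_eq_prod_range]
    have h2 : Fintype.card {v : Fin s → V // LinearIndependent F v} =
        ∑ D ∈ univ.filter (fun D : Submodule F V => finrank F ↥D = s),
          Fintype.card {w : Fin s → ↥D // LinearIndependent F w} := by
      rw [← Finset.card_univ]
      rw [Finset.card_eq_sum_card_fiberwise
        (f := fun v : {v : Fin s → V // LinearIndependent F v} =>
          Submodule.span F (Set.range v.1))
        (t := univ.filter (fun D : Submodule F V => finrank F ↥D = s))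
        (fun v _ => by
          simp only [Finset.mem_coe, Finset.mem_filter, Finset.mem_univ, true_and]
          rw [finrank_span_eq_card v.2, Fintype.card_fin])]
      refine Finset.sum_congr rfl fun D hD => ?_
      have hD' : finrank F ↥D = s := (Finset.mem_filter.1 hD).2
      rw [← Fintype.card_congr (fiberEquiv s D hD')]
      rw [Fintype.card_subtype]
    have key : (univ.filter (fun D : Submodule F V => finrank F ↥D = s)).card *
        ∏ i ∈ Finset.range s, (q ^ s - q ^ i) = ∏ i ∈ Finset.range s, (q ^ t - q ^ i) := by
      rw [← h1, h2, Finset.sum_congr rfl (fun D hD => fiber D (Finset.mem_filter.1 hD).2),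
        Finset.sum_const, smul_eq_mul]
    have hcard : Nat.card {D : Submodule F V // finrank F ↥D = s} =
        (univ.filter (fun D : Submodule F V => finrank F ↥D = s)).card := by
      rw [Nat.card_eq_fintype_card, Fintype.card_subtype]
    -- cast to ℚ
    have hden : (∏ i ∈ Finset.range s, ((q:ℚ) ^ s - (q:ℚ) ^ i)) ≠ 0 := by
      refine Finset.prod_ne_zero_iff.2 fun i hi => sub_ne_zero.2 ?_
      have : q ^ i < q ^ s := Nat.pow_lt_pow_right hq1 (Finset.mem_range.1 hi)
      exact_mod_cast this.ne'
    have hc1 : ((∏ i ∈ Finset.range s, (q ^ s - q ^ i) : ℕ) : ℚ) =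
        ∏ i ∈ Finset.range s, ((q:ℚ) ^ s - (q:ℚ) ^ i) := by
      rw [Nat.cast_prod]
      refine Finset.prod_congr rfl fun i hi => ?_
      have : q ^ i ≤ q ^ s := Nat.pow_le_pow_right (by omega) (Finset.mem_range.1 hi).le
      push_cast [Nat.cast_sub this]; ring
    have hc2 : ((∏ i ∈ Finset.range s, (q ^ t - q ^ i) : ℕ) : ℚ) =
        ∏ i ∈ Finset.range s, ((q:ℚ) ^ t - (q:ℚ) ^ i) := by
      rw [Nat.cast_prod]
      refine Finset.prod_congr rfl fun i hi => ?_
      have : q ^ i ≤ q ^ t := Nat.pow_le_pow_right (by omega)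
        (le_trans (Finset.mem_range.1 hi).le hst)
      push_cast [Nat.cast_sub this]; ring
    rw [hcard, gbinom, if_pos hst, eq_div_iff hden, ← hc1, ← hc2, ← Nat.cast_mul, key]
  · haveI : IsEmpty {D : Submodule F V // finrank F ↥D = s} :=
      ⟨fun D => hst (D.2 ▸ Submodule.finrank_le D.1)⟩
    rw [Nat.card_of_isEmpty, gbinom, if_neg hst, Nat.cast_zero]

lemma card_sub_grass (W : Submodule F V) (s : ℕ) :
    (Nat.card {D : Submodule F V // D ≤ W ∧ finrank F ↥D = s} : ℚ) =
      gbinom (Fintype.card F) (finrank F ↥W) s := by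
  haveI : Module.Finite F V := Module.Finite.of_finite
  rw [← card_grass (F := F) (V := ↥W) s]
  congr 1
  refine Nat.card_congr ⟨fun D => ⟨Submodule.comap W.subtype D.1, ?_⟩,
    fun D' => ⟨Submodule.map W.subtype D'.1, Submodule.map_subtype_le W D'.1, ?_⟩, ?_, ?_⟩
  · rw [(Submodule.comapSubtypeEquivOfLe D.2.1).finrank_eq]; exact D.2.2
  · rw [Submodule.finrank_map_subtype_eq]; exact D'.2
  · rintro ⟨D, hle, hr⟩
    refine Subtype.ext ?_
    simp only [Submodule.map_comap_subtype]
    exact inf_eq_right.2 hle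
  · rintro ⟨D', hr⟩
    refine Subtype.ext ?_
    simp only [Submodule.comap_map_eq, Submodule.ker_subtype, sup_bot_eq]

end Aux

/-- for any [n,k] linear code over `F_q` and `1 ≤ s ≤ k`, the `s`-th higher
support weight enumerator polynomial satisfies
`W^{(s)}_C(Z) = ∑_{U ⊆ [n]} Z^(n-|U|) (1-Z)^|U| · [k-ρ(U) choose s]_q` in `ℚ[Z]`; moreover
`[k-ρ(U) choose s]_q = 0` whenever `|U| ≥ n - d_s + 1`, so the sum may be restricted to
subsets `U` with `|U| ≤ n - d_s`. -/
theorem stmt_14 (n k q s : ℕ) (F : Type) [Field F] [Fintype F] [DecidableEq F]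
    (hq : q = Fintype.card F) (hs1 : 1 ≤ s) (hsk : s ≤ k)
    (C : Submodule F (Fin n → F)) (hdim : Module.finrank F C = k)
    (ρ : Finset (Fin n) → ℕ)
    (hρ : ∀ U : Finset (Fin n),
      ρ U = Module.finrank F (C.map (LinearMap.funLeft F F (Subtype.val : ↥U → Fin n))))
    (As : ℕ → ℕ)
    (hAs : ∀ w, As w = Nat.card {D : Submodule F (Fin n → F) //
      D ≤ C ∧ Module.finrank F D = s ∧ Set.ncard {j : Fin n | ∃ c ∈ D, c j ≠ 0} = w})
    (ds : ℕ)
    (hds : IsLeast {w | ∃ D : Submodule F (Fin n → F), D ≤ C ∧ Module.finrank F D = s ∧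
      Set.ncard {j : Fin n | ∃ c ∈ D, c j ≠ 0} = w} ds) :
    (∑ w ∈ Finset.range (n + 1), (As w : ℚ[X]) * X ^ w =
      ∑ U : Finset (Fin n),
        X ^ (n - U.card) * (1 - X) ^ U.card * Polynomial.C (gbinom q (k - ρ U) s)) ∧
    (∀ U : Finset (Fin n), n - ds + 1 ≤ U.card → gbinom q (k - ρ U) s = 0) ∧
    (∑ w ∈ Finset.range (n + 1), (As w : ℚ[X]) * X ^ w =
      ∑ U ∈ Finset.univ.filter (fun U : Finset (Fin n) => U.card ≤ n - ds),
        X ^ (n - U.card) * (1 - X) ^ U.card * Polynomial.C (gbinom q (k - ρ U) s)) := by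
  classical
  subst hq
  haveI : Finite (Submodule F (Fin n → F)) := Finite.of_injective _ SetLike.coe_injective
  haveI := Fintype.ofFinite (Submodule F (Fin n → F))
  set q := Fintype.card F with hqdef
  set supp : Submodule F (Fin n → F) → Finset (Fin n) :=
    fun D => univ.filter (fun j => ∃ c ∈ D, c j ≠ 0) with hsupp
  have hwt : ∀ D : Submodule F (Fin n → F),
      Set.ncard {j : Fin n | ∃ c ∈ D, c j ≠ 0} = (supp D).card := by
    intro D
    rw [← Set.ncard_coe_finset]
    congr 1
    ext j; simp [hsupp]
  set GF : Finset (Submodule F (Fin n → F)) :=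
    univ.filter (fun D => D ≤ C ∧ finrank F ↥D = s) with hGF
  have hA : ∀ w, As w = (GF.filter (fun D => (supp D).card = w)).card := by
    intro w
    rw [hAs w, Nat.card_eq_fintype_card, Fintype.card_subtype]
    congr 1
    ext D
    simp only [hGF, Finset.filter_filter, Finset.mem_filter, Finset.mem_univ, true_and,
      hwt D, and_assoc]
  have hsuppcard : ∀ D : Submodule F (Fin n → F), (supp D).card ≤ n := fun D => by
    simpa using Finset.card_le_univ (supp D)
  have hL : ∑ w ∈ Finset.range (n + 1), (As w : ℚ[X]) * X ^ w
      = ∑ D ∈ GF, X ^ (supp D).card := by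
    rw [← Finset.sum_fiberwise_of_maps_to (g := fun D => (supp D).card)
      (t := Finset.range (n+1)) (fun D _ => Finset.mem_range.2 (Nat.lt_succ_of_le (hsuppcard D)))
      (fun D => (X:ℚ[X]) ^ (supp D).card)]
    refine Finset.sum_congr rfl fun w _ => ?_
    rw [Finset.sum_congr rfl (fun D hD => by rw [(Finset.mem_filter.1 hD).2]),
      Finset.sum_const, nsmul_eq_mul, hA w]
  have hCU : ∀ U : Finset (Fin n),
      finrank F ↥(C ⊓ LinearMap.ker (LinearMap.funLeft F F (Subtype.val : ↥U → Fin n)))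
        = k - ρ U := by
    intro U
    set g := LinearMap.funLeft F F (Subtype.val : ↥U → Fin n) with hg
    have h1 := LinearMap.finrank_range_add_finrank_ker (g.comp C.subtype)
    have h2 : LinearMap.range (g.comp C.subtype) = Submodule.map g C := by
      rw [LinearMap.range_comp, Submodule.range_subtype]
    have h3 : LinearMap.ker (g.comp C.subtype) =
        Submodule.comap C.subtype (C ⊓ LinearMap.ker g) := by
      rw [LinearMap.ker_comp, Submodule.comap_inf, Submodule.comap_subtype_self, top_inf_eq]
    have h4 : finrank F ↥(Submodule.comap C.subtype (C ⊓ LinearMap.ker g)) =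
        finrank F ↥(C ⊓ LinearMap.ker g) :=
      (Submodule.comapSubtypeEquivOfLe inf_le_left).finrank_eq
    rw [h2, h3, h4, hdim] at h1
    rw [hρ U, ← hg]
    omega
  have hker : ∀ (U : Finset (Fin n)) (D : Submodule F (Fin n → F)),
      U ⊆ (supp D)ᶜ ↔ D ≤ LinearMap.ker (LinearMap.funLeft F F (Subtype.val : ↥U → Fin n)) := by
    intro U D
    constructor
    · intro h c hc
      rw [LinearMap.mem_ker]
      ext u
      have h2 := h u.2
      simp only [hsupp, Finset.mem_compl, Finset.mem_filter, Finset.mem_univ, true_and,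
        not_exists, not_and, not_not] at h2
      simpa using h2 c hc
    · intro h i hi
      simp only [hsupp, Finset.mem_compl, Finset.mem_filter, Finset.mem_univ, true_and,
        not_exists, not_and, not_not]
      intro c hc
      have h2 := h hc
      rw [LinearMap.mem_ker] at h2
      simpa using congrFun h2 ⟨i, hi⟩
  have hcount : ∀ U : Finset (Fin n),
      ((GF.filter (fun D => U ⊆ (supp D)ᶜ)).card : ℚ) = gbinom q (k - ρ U) s := by
    intro U
    rw [← hCU U, ← card_sub_grass
      (C ⊓ LinearMap.ker (LinearMap.funLeft F F (Subtype.val : ↥U → Fin n))) s]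
    congr 1
    rw [Nat.card_eq_fintype_card, Fintype.card_subtype]
    congr 1
    ext D
    simp only [hGF, Finset.filter_filter, Finset.mem_filter, Finset.mem_univ, true_and,
      le_inf_iff, hker U D]
    tauto
  have part2 : ∀ U : Finset (Fin n), n - ds + 1 ≤ U.card → gbinom q (k - ρ U) s = 0 := by
    intro U hU
    by_contra hne
    have hc0 : (GF.filter (fun D => U ⊆ (supp D)ᶜ)).card ≠ 0 := by
      intro h
      exact hne (by rw [← hcount U, h, Nat.cast_zero])
    obtain ⟨D, hD⟩ := Finset.card_pos.1 (Nat.pos_of_ne_zero hc0)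
    simp only [hGF, Finset.filter_filter, Finset.mem_filter, Finset.mem_univ, true_and] at hD
    obtain ⟨⟨hDC, hDr⟩, hDU⟩ := hD
    have h1 : ds ≤ (supp D).card := hds.2 ⟨D, hDC, hDr, hwt D⟩
    have h2 : supp D ⊆ Uᶜ := Finset.subset_compl_comm.1 hDU
    have h3 : (supp D).card ≤ n - U.card := by
      have := Finset.card_le_card h2
      rwa [Finset.card_compl, Fintype.card_fin] at this
    have h4 : U.card ≤ n := by simpa using Finset.card_le_univ U
    omega
  have hpow : ∀ D ∈ GF, ∑ U ∈ ((supp D)ᶜ).powerset,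
      (X:ℚ[X]) ^ (n - U.card) * (1 - X) ^ U.card = X ^ (supp D).card := by
    intro D _
    have hT : ((supp D)ᶜ).card = n - (supp D).card := by
      rw [Finset.card_compl, Fintype.card_fin]
    have hone : (1:ℚ[X]) = ∑ U ∈ ((supp D)ᶜ).powerset,
        (1 - X) ^ U.card * X ^ (((supp D)ᶜ).card - U.card) := by
      have hp := Finset.prod_add (fun _ : Fin n => (1:ℚ[X]) - X) (fun _ => (X:ℚ[X])) ((supp D)ᶜ)
      simp only [sub_add_cancel, Finset.prod_const_one, Finset.prod_const] at hp
      refine hp.trans (Finset.sum_congr rfl fun U hU => ?_)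
      rw [Finset.card_sdiff_of_subset (Finset.mem_powerset.1 hU)]
    calc ∑ U ∈ ((supp D)ᶜ).powerset, (X:ℚ[X]) ^ (n - U.card) * (1 - X) ^ U.card
        = ∑ U ∈ ((supp D)ᶜ).powerset,
            X ^ (supp D).card * ((1 - X) ^ U.card * X ^ (((supp D)ᶜ).card - U.card)) := by
          refine Finset.sum_congr rfl fun U hU => ?_
          have hUc : U.card ≤ ((supp D)ᶜ).card :=
            Finset.card_le_card (Finset.mem_powerset.1 hU)
          have hsn := hsuppcard D
          have hn : n - U.card = (supp D).card + (((supp D)ᶜ).card - U.card) := by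
            rw [hT] at hUc ⊢; omega
          rw [hn, pow_add]; ring
      _ = X ^ (supp D).card := by rw [← Finset.mul_sum, ← hone, mul_one]
  have hR : ∑ U : Finset (Fin n),
      (X:ℚ[X]) ^ (n - U.card) * (1 - X) ^ U.card * Polynomial.C (gbinom q (k - ρ U) s)
      = ∑ D ∈ GF, X ^ (supp D).card := by
    calc ∑ U : Finset (Fin n),
        (X:ℚ[X]) ^ (n - U.card) * (1 - X) ^ U.card * Polynomial.C (gbinom q (k - ρ U) s)
        = ∑ U : Finset (Fin n), ∑ D ∈ GF.filter (fun D => U ⊆ (supp D)ᶜ),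
            (X:ℚ[X]) ^ (n - U.card) * (1 - X) ^ U.card := by
          refine Finset.sum_congr rfl fun U _ => ?_
          rw [Finset.sum_const, ← hcount U, map_natCast (Polynomial.C : ℚ →+* ℚ[X]),
            nsmul_eq_mul]
          ring
      _ = ∑ D ∈ GF, ∑ U ∈ ((supp D)ᶜ).powerset,
            (X:ℚ[X]) ^ (n - U.card) * (1 - X) ^ U.card := by
          simp_rw [Finset.sum_filter]
          rw [Finset.sum_comm]
          refine Finset.sum_congr rfl fun D _ => ?_
          rw [← Finset.sum_filter]
          congr 1
          ext U
          simp [Finset.mem_powerset]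
      _ = ∑ D ∈ GF, X ^ (supp D).card := Finset.sum_congr rfl hpow
  refine ⟨hL.trans hR.symm, part2, ?_⟩
  rw [hL, ← hR]
  refine (Finset.sum_subset (Finset.filter_subset _ _) ?_).symm
  intro U _ hU
  simp only [Finset.mem_filter, Finset.mem_univ, true_and, not_le] at hU
  rw [part2 U (by omega), map_zero, mul_zero]
end
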